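/- Let n, m be positive integers and let 𝒜 ∈ ℝ^{n×n}, ℬ ∈ ℝ^{n×m}, 𝒞 ∈ ℝ^{m×n}, 𝒟 ∈ ℝ^{m×m}. Suppose there exists a symmetric positive definite matrix X ∈ ℝ^{n×n} such that the quadratic form Q(x, q) := (𝒜x + ℬq)ᵀ X (𝒜x + ℬq) − xᵀ X x + 2 qᵀ(𝒞x + 𝒟q) is negative definite, i.e., Q(x, q) < 0 for all (x, q) ≠ (0, 0). Then for any sequences x : ℕ → ℝ^n and q : ℕ → ℝ^m satisfying x_{k+1} = 𝒜x_k + ℬq_k for all k, and satisfying the integral quadratic constraint Σ_{k=0}^{T} q_kᵀ(𝒞x_k + 𝒟q_k) ≥ 0 for all T ∈ ℕ, it holds that: (a) x_Tᵀ X x_T ≤ x_0ᵀ X x_0 for all T ∈ ℕ, and (b) x_k → 0 as k → ∞. -/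

import Mathlib

open Filter Matrix

theorem dissipativity_analysis {n m : ℕ} (hn : 0 < n) (hm : 0 < m)
    (A : Matrix (Fin n) (Fin n) ℝ) (B : Matrix (Fin n) (Fin m) ℝ)
    (C : Matrix (Fin m) (Fin n) ℝ) (D : Matrix (Fin m) (Fin m) ℝ)
    (X : Matrix (Fin n) (Fin n) ℝ) (hX : X.PosDef)
    (hQ : ∀ (x : Fin n → ℝ) (q : Fin m → ℝ), ¬ (x = 0 ∧ q = 0) →
      (A.mulVec x + B.mulVec q) ⬝ᵥ X.mulVec (A.mulVec x + B.mulVec q)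
        - x ⬝ᵥ X.mulVec x
        + 2 * (q ⬝ᵥ (C.mulVec x + D.mulVec q)) < 0)
    (x : ℕ → Fin n → ℝ) (q : ℕ → Fin m → ℝ)
    (hdyn : ∀ k : ℕ, x (k + 1) = A.mulVec (x k) + B.mulVec (q k))
    (hiqc : ∀ T : ℕ, 0 ≤ ∑ k ∈ Finset.range (T + 1),
      q k ⬝ᵥ (C.mulVec (x k) + D.mulVec (q k))) :
    (∀ T : ℕ, x T ⬝ᵥ X.mulVec (x T) ≤ x 0 ⬝ᵥ X.mulVec (x 0)) ∧
      Tendsto x atTop (nhds 0) := by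
  classical
  haveI : Nonempty (Fin n) := ⟨⟨0, hn⟩⟩
  set F : (Fin n → ℝ) × (Fin m → ℝ) → ℝ := fun p =>
    (A.mulVec p.1 + B.mulVec p.2) ⬝ᵥ X.mulVec (A.mulVec p.1 + B.mulVec p.2)
      - p.1 ⬝ᵥ X.mulVec p.1 + 2 * (p.2 ⬝ᵥ (C.mulVec p.1 + D.mulVec p.2)) with hF
  have hFneg : ∀ p : (Fin n → ℝ) × (Fin m → ℝ), p ≠ 0 → F p < 0 := by
    intro p hp
    refine hQ p.1 p.2 fun h => hp (Prod.ext h.1 h.2)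
  have hF0 : F 0 = 0 := by
    simp [hF]
  have hFle : ∀ p : (Fin n → ℝ) × (Fin m → ℝ), F p ≤ 0 := by
    intro p
    rcases eq_or_ne p 0 with rfl | hp
    · exact le_of_eq hF0
    · exact (hFneg p hp).le
  -- homogeneity
  have hFhom : ∀ (c : ℝ) (p : (Fin n → ℝ) × (Fin m → ℝ)), F (c • p) = c ^ 2 * F p := by
    intro c p
    simp only [hF, Prod.smul_fst, Prod.smul_snd, Matrix.mulVec_smul,
      Matrix.mulVec_add, smul_dotProduct, dotProduct_smul, add_dotProduct,
      dotProduct_add, smul_eq_mul]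
    ring
  -- continuity
  have hFcont : Continuous F := by
    apply Continuous.add
    · apply Continuous.sub
      · exact Continuous.dotProduct
          ((continuous_const.matrix_mulVec continuous_fst).add
            (continuous_const.matrix_mulVec continuous_snd))
          (continuous_const.matrix_mulVec
            ((continuous_const.matrix_mulVec continuous_fst).add
              (continuous_const.matrix_mulVec continuous_snd)))
      · exact Continuous.dotProduct continuous_fst
          (continuous_const.matrix_mulVec continuous_fst)
    · exact continuous_const.mul
        (Continuous.dotProduct continuous_snd
          ((continuous_const.matrix_mulVec continuous_fst).add
            (continuous_const.matrix_mulVec continuous_snd)))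
  -- compactness: maximize F on the unit sphere
  obtain ⟨p₀, hp₀mem, hmax⟩ :=
    (isCompact_sphere (0 : (Fin n → ℝ) × (Fin m → ℝ)) 1).exists_isMaxOn
      (NormedSpace.sphere_nonempty.mpr zero_le_one) hFcont.continuousOn
  have hp₀norm : ‖p₀‖ = 1 := mem_sphere_zero_iff_norm.mp hp₀mem
  set ε : ℝ := -F p₀ with hε
  have hεpos : 0 < ε := by
    have : F p₀ < 0 := hFneg p₀ (by
      intro h; rw [h, norm_zero] at hp₀norm; norm_num at hp₀norm)
    linarith
  have key : ∀ p : (Fin n → ℝ) × (Fin m → ℝ), F p ≤ -ε * ‖p‖ ^ 2 := by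
    intro p
    rcases eq_or_ne p 0 with rfl | hp
    · simp [hF0]
    · have hnp : ‖p‖ ≠ 0 := norm_ne_zero_iff.mpr hp
      have h1 : (‖p‖⁻¹ • p) ∈ Metric.sphere (0 : (Fin n → ℝ) × (Fin m → ℝ)) 1 := by
        simp [norm_smul, abs_of_nonneg (inv_nonneg.mpr (norm_nonneg p)),
          inv_mul_cancel₀ hnp]
      have h2 : F p = ‖p‖ ^ 2 * F (‖p‖⁻¹ • p) := by
        rw [← hFhom]
        congr 1
        rw [smul_smul, mul_inv_cancel₀ hnp, one_smul]
      rw [h2]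
      have := mul_le_mul_of_nonneg_left (hmax h1) (sq_nonneg ‖p‖)
      calc ‖p‖ ^ 2 * F (‖p‖⁻¹ • p) ≤ ‖p‖ ^ 2 * F p₀ := this
        _ = -ε * ‖p‖ ^ 2 := by rw [hε, neg_neg]; ring
  -- telescoping identity for the storage function
  set V : ℕ → ℝ := fun k => x k ⬝ᵥ X.mulVec (x k) with hV
  set r : ℕ → ℝ := fun k => q k ⬝ᵥ (C.mulVec (x k) + D.mulVec (q k)) with hr
  have hstep : ∀ k : ℕ, V (k + 1) = V k + F (x k, q k) - 2 * r k := by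
    intro k
    simp only [hV, hF, hr, hdyn k]
    ring
  have htel : ∀ T : ℕ, V T = V 0 + (∑ k ∈ Finset.range T, F (x k, q k))
      - 2 * ∑ k ∈ Finset.range T, r k := by
    intro T
    induction T with
    | zero => simp
    | succ S ih =>
      rw [hstep S, ih, Finset.sum_range_succ, Finset.sum_range_succ]
      ring
  have hVnonneg : ∀ k, 0 ≤ V k := fun k => hX.posSemidef.dotProduct_mulVec_nonneg (x k)
  have partA : ∀ T : ℕ, V T ≤ V 0 := by
    intro T
    rcases T with _ | S
    · exact le_refl _
    · rw [htel (S + 1)]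
      have h1 : (∑ k ∈ Finset.range (S + 1), F (x k, q k)) ≤ 0 :=
        Finset.sum_nonpos fun k _ => hFle _
      have h2 : 0 ≤ ∑ k ∈ Finset.range (S + 1), r k := hiqc S
      linarith
  refine ⟨partA, ?_⟩
  -- summability of ‖x k‖ ^ 2
  have hbound : ∀ T : ℕ, ∑ k ∈ Finset.range T, ‖x k‖ ^ 2 ≤ V 0 / ε := by
    intro T
    rcases T with _ | S
    · simpa using div_nonneg (hVnonneg 0) hεpos.le
    · have h1 : ε * ∑ k ∈ Finset.range (S + 1), ‖x k‖ ^ 2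
          ≤ - ∑ k ∈ Finset.range (S + 1), F (x k, q k) := by
        rw [← Finset.sum_neg_distrib, Finset.mul_sum]
        refine Finset.sum_le_sum fun k _ => ?_
        have h2 : F (x k, q k) ≤ -ε * ‖(x k, q k)‖ ^ 2 := key _
        have h3 : ‖x k‖ ≤ ‖(x k, q k)‖ := norm_fst_le (x k, q k)
        have h4 : ‖x k‖ ^ 2 ≤ ‖(x k, q k)‖ ^ 2 :=
          pow_le_pow_left₀ (norm_nonneg _) h3 2
        nlinarith [hεpos]
      have h5 : - ∑ k ∈ Finset.range (S + 1), F (x k, q k) ≤ V 0 := by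
        have := htel (S + 1)
        have h6 : 0 ≤ ∑ k ∈ Finset.range (S + 1), r k := hiqc S
        have h7 := hVnonneg (S + 1)
        linarith
      rw [le_div_iff₀ hεpos]
      calc (∑ k ∈ Finset.range (S + 1), ‖x k‖ ^ 2) * ε
          = ε * ∑ k ∈ Finset.range (S + 1), ‖x k‖ ^ 2 := by ring
        _ ≤ - ∑ k ∈ Finset.range (S + 1), F (x k, q k) := h1
        _ ≤ V 0 := h5
  have hsum : Summable fun k => ‖x k‖ ^ 2 :=
    summable_of_sum_range_le (fun k => sq_nonneg _) hbound
  have h2 : Tendsto (fun k => ‖x k‖ ^ 2) atTop (nhds 0) :=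
    hsum.tendsto_atTop_zero
  have h3 : Tendsto (fun k => Real.sqrt (‖x k‖ ^ 2)) atTop (nhds (Real.sqrt 0)) :=
    (Real.continuous_sqrt.tendsto 0).comp h2
  have heq : (fun k => Real.sqrt (‖x k‖ ^ 2)) = fun k => ‖x k‖ :=
    funext fun k => Real.sqrt_sq (norm_nonneg _)
  rw [heq, Real.sqrt_zero] at h3
  exact tendsto_zero_iff_norm_tendsto_zero.mpr h3
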